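/- Let (Ω, F, P) be a probability space with filtration F₀ ⊆ F₁ ⊆ … ⊆ F_N, let E be a real normed vector space, and let Θ ⊆ E be a nonempty closed convex separable set. Fix β > 0, R > 0, N ≥ 1, and a constant Ê ≥ 0. For n = 1, …, N let ℓ̂_n : Ω × E → ℝ be such that almost surely ℓ̂_n(ω, ·) is CSN with smoothness β; let θ_n : Ω → Θ be F_{n−1}-measurable with ℓ̂_n(·, θ_n(·)) integrable; and let ℓ_n : Ω × E → ℝ satisfy, almost surely, E[ℓ̂_n(·, θ_n(·)) | F_{n−1}] = ℓ_n(·, θ_n(·)) and ℓ_n(ω, θ) ≥ 0 for all θ. Let ε̂(ω) = (1/N) inf_{θ∈Θ} Σ_{n=1}^N ℓ̂_n(ω, θ), assume ε̂ is integrable, and assume ε̂ ≤ Ê almost surely. Set η* = 1/(2(β + √(β² + βNÊ/(2R²)))), and assume that almost surely Regret(ℓ̂_n) ≤ R²/η* + (η*/2) Σ_{n=1}^N ‖ℓ̂_n′(θ_n)‖², where ℓ̂_n′(θ_n) is the Fréchet derivative of ℓ̂_n(ω, ·) at θ_n(ω). Then E[(1/N) Σ_{n=1}^N ℓ_n(·,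 θ_n(·)) − ε̂] ≤ 8βR²/N + √(8βR²Ê/N). -/

import Mathlib

open MeasureTheory Finset

/-- A differentiable function `f : E → ℝ` is CSN with smoothness `β` if it is convex,
non-negative, and its Fréchet derivative is `β`-Lipschitz in the operator (dual) norm. -/
def IsCSN {E : Type*} [NormedAddCommGroup E] [NormedSpace ℝ E]
    (f : E → ℝ) (β : ℝ) : Prop :=
  ConvexOn ℝ Set.univ f ∧ (∀ x, 0 ≤ f x) ∧ Differentiable ℝ f ∧
    ∀ x y, ‖fderiv ℝ f x - fderiv ℝ f y‖ ≤ β * ‖x - y‖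

/-- `Regret(f_n) = Σ_{n=1}^N f_n(θ_n) − inf_{θ ∈ Θ} Σ_{n=1}^N f_n(θ)`. -/
noncomputable def regret {E : Type*} (Θ : Set E) (N : ℕ)
    (f : ℕ → E → ℝ) (θ : ℕ → E) : ℝ :=
  (∑ n ∈ Finset.Icc 1 N, f n (θ n))
    - sInf ((fun x => ∑ n ∈ Finset.Icc 1 N, f n x) '' Θ)

lemma descent_aux {E : Type*} [NormedAddCommGroup E] [NormedSpace ℝ E] {f : E → ℝ} {β : ℝ}
    (hβ : 0 ≤ β) (hd : Differentiable ℝ f)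
    (hL : ∀ x y, ‖fderiv ℝ f x - fderiv ℝ f y‖ ≤ β * ‖x - y‖)
    (x v : E) : f (x + v) ≤ f x + fderiv ℝ f x v + β * ‖v‖ ^ 2 := by
  set g : ℝ → ℝ := fun t => f (x + t • v) - t * (fderiv ℝ f x v) with hg
  have hder : ∀ t ∈ Set.Icc (0:ℝ) 1,
      HasDerivWithinAt g (fderiv ℝ f (x + t • v) v - fderiv ℝ f x v) (Set.Icc 0 1) t := by
    intro t _
    have hc : HasDerivAt (fun t : ℝ => x + t • v) v t := by
      simpa using ((hasDerivAt_id t).smul_const v).const_add x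
    have h1 : HasDerivAt (fun t : ℝ => f (x + t • v)) (fderiv ℝ f (x + t • v) v) t := by
      exact (hd (x + t • v)).hasFDerivAt.comp_hasDerivAt t hc
    exact ((h1.sub ((hasDerivAt_id t).mul_const _)).hasDerivWithinAt).congr_deriv (by ring)
  have hbound : ∀ t ∈ Set.Icc (0:ℝ) 1,
      ‖fderiv ℝ f (x + t • v) v - fderiv ℝ f x v‖ ≤ β * ‖v‖ ^ 2 := by
    intro t ht
    have h1 : fderiv ℝ f (x + t • v) v - fderiv ℝ f x v
        = (fderiv ℝ f (x + t • v) - fderiv ℝ f x) v := by simp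
    rw [h1]
    calc ‖(fderiv ℝ f (x + t • v) - fderiv ℝ f x) v‖
        ≤ ‖fderiv ℝ f (x + t • v) - fderiv ℝ f x‖ * ‖v‖ :=
          (fderiv ℝ f (x + t • v) - fderiv ℝ f x).le_opNorm v
      _ ≤ (β * ‖x + t • v - x‖) * ‖v‖ := by
          gcongr; exact hL _ _
      _ ≤ β * ‖v‖ ^ 2 := by
          have : ‖x + t • v - x‖ = |t| * ‖v‖ := by
            simp [norm_smul]
          rw [this, abs_of_nonneg ht.1]
          nlinarith [mul_nonneg (mul_nonneg hβ (sub_nonneg.2 ht.2)) (sq_nonneg ‖v‖)]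
  have := Convex.norm_image_sub_le_of_norm_hasDerivWithin_le hder hbound (convex_Icc 0 1)
    (Set.left_mem_Icc.2 zero_le_one) (Set.right_mem_Icc.2 zero_le_one)
  have h10 : g 1 - g 0 = f (x + v) - fderiv ℝ f x v - f x := by simp [hg]
  rw [h10] at this
  have := (abs_le.1 (by simpa using this)).2
  linarith

lemma grad_self_bound {E : Type*} [NormedAddCommGroup E] [NormedSpace ℝ E] {f : E → ℝ} {β : ℝ}
    (hβ : 0 < β) (hf : IsCSN f β) (x : E) : ‖fderiv ℝ f x‖ ^ 2 ≤ 4 * β * f x := by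
  obtain ⟨-, hpos, hd, hL⟩ := hf
  have hfx : 0 ≤ f x := hpos x
  have hβfx : 0 ≤ β * f x := mul_nonneg hβ.le hfx
  have key : ∀ w : E, fderiv ℝ f x w ≤ 2 * Real.sqrt (β * f x) * ‖w‖ := by
    intro w
    rcases le_or_gt (fderiv ℝ f x w) 0 with ha | ha
    · exact ha.trans (by positivity)
    · have hw : 0 < ‖w‖ := by
        rcases eq_or_ne w 0 with rfl | hw
        · simp only [map_zero] at ha; exact absurd ha (lt_irrefl _)
        · exact norm_pos_iff.2 hw
      set a := fderiv ℝ f x w with hadef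
      set t : ℝ := a / (2 * β * ‖w‖ ^ 2) with htdef
      have ht : 0 < t := by positivity
      have hdes := descent_aux hβ.le hd hL x (-(t • w))
      have h0 : (0:ℝ) ≤ f (x + -(t • w)) := hpos _
      have hlin : fderiv ℝ f x (-(t • w)) = -(t * a) := by
        rw [map_neg, ContinuousLinearMap.map_smul]; simp [hadef, smul_eq_mul]
      have hnrm : ‖-(t • w)‖ ^ 2 = t ^ 2 * ‖w‖ ^ 2 := by
        rw [norm_neg, norm_smul]
        rw [Real.norm_eq_abs, abs_of_nonneg ht.le]; ring
      rw [hlin, hnrm] at hdes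
      have hq : a ^ 2 ≤ 4 * (β * f x) * ‖w‖ ^ 2 := by
        have ht2 : t * a - β * (t ^ 2 * ‖w‖ ^ 2) ≤ f x := by nlinarith
        have htval : t * a - β * (t ^ 2 * ‖w‖ ^ 2) = a ^ 2 / (4 * β * ‖w‖ ^ 2) := by
          rw [htdef]; field_simp; ring
        rw [htval] at ht2
        rw [div_le_iff₀ (by positivity)] at ht2
        nlinarith
      have hsq : (2 * Real.sqrt (β * f x) * ‖w‖) ^ 2 = 4 * (β * f x) * ‖w‖ ^ 2 := by
        rw [mul_pow, mul_pow, Real.sq_sqrt hβfx]; ring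
      nlinarith [Real.sqrt_nonneg (β * f x), hsq, hq, ha, mul_nonneg (mul_nonneg (by norm_num : (0:ℝ) ≤ 2) (Real.sqrt_nonneg (β * f x))) hw.le]
  have hop : ‖fderiv ℝ f x‖ ≤ 2 * Real.sqrt (β * f x) := by
    refine ContinuousLinearMap.opNorm_le_bound _ (by positivity) fun w => ?_
    rw [Real.norm_eq_abs, abs_le]
    constructor
    · have h := key (-w)
      rw [map_neg, norm_neg] at h
      linarith
    · exact key w
  calc ‖fderiv ℝ f x‖ ^ 2 ≤ (2 * Real.sqrt (β * f x)) ^ 2 :=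
        pow_le_pow_left₀ (norm_nonneg _) hop 2
    _ = 4 * β * f x := by rw [mul_pow, Real.sq_sqrt hβfx]; ring

lemma pointwise_alg (β R Ehat : ℝ) (hβ : 0 < β) (hR : 0 < R) (hE : 0 ≤ Ehat)
    (N : ℕ) (hN : 1 ≤ N) (A G ε ηstar : ℝ)
    (hG : G ≤ 4 * β * A) (hεE : ε ≤ Ehat)
    (hη : ηstar = 1 / (2 * (β + Real.sqrt (β ^ 2 + β * N * Ehat / (2 * R ^ 2)))))
    (hreg : A - N * ε ≤ R ^ 2 / ηstar + (ηstar / 2) * G) :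
    (1 / (N : ℝ)) * A - ε ≤ 8 * β * R ^ 2 / N + Real.sqrt (8 * β * R ^ 2 * Ehat / N) := by
  have hNpos : (0:ℝ) < N := by exact_mod_cast Nat.lt_of_lt_of_le Nat.zero_lt_one hN
  set c := β * N * Ehat / (2 * R ^ 2) with hc
  have hc0 : 0 ≤ c := by positivity
  set s := Real.sqrt (β ^ 2 + c) with hs
  have hs2 : s ^ 2 = β ^ 2 + c := Real.sq_sqrt (by positivity)
  have hsβ : β ≤ s := by
    rw [hs]
    calc β = Real.sqrt (β ^ 2) := (Real.sqrt_sq hβ.le).symm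
      _ ≤ _ := Real.sqrt_le_sqrt (by linarith)
  have hspos : 0 < s := lt_of_lt_of_le hβ hsβ
  have hD : 0 < β + s := by linarith
  have hη0 : 0 < ηstar := by rw [hη]; positivity
  have hNε : (N:ℝ) * ε ≤ N * Ehat := by nlinarith
  have hβNE : β * ((N:ℝ) * Ehat) = 2 * R ^ 2 * c := by
    rw [hc]; field_simp
  have h1 : (β + s) * (A - N * ε) ≤ 2 * R ^ 2 * (β + s) ^ 2 + β * A := by
    have hr2 : R ^ 2 / ηstar = 2 * R ^ 2 * (β + s) := by
      rw [hη]; field_simp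
    have hg2 : (ηstar / 2) * G ≤ (β / (β + s)) * A := by
      calc (ηstar / 2) * G ≤ (ηstar / 2) * (4 * β * A) := by
            exact mul_le_mul_of_nonneg_left hG (by positivity)
        _ = (β / (β + s)) * A := by rw [hη]; field_simp; ring
    have h := mul_le_mul_of_nonneg_left
      (hreg.trans (by linarith : R ^ 2 / ηstar + (ηstar / 2) * G
        ≤ 2 * R ^ 2 * (β + s) + (β / (β + s)) * A)) hD.le
    calc (β + s) * (A - N * ε) ≤ (β + s) * (2 * R ^ 2 * (β + s) + (β / (β + s)) * A) := h
      _ = 2 * R ^ 2 * (β + s) ^ 2 + β * A := by field_simp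
  have hmain : A - N * ε ≤ 4 * R ^ 2 * (β + s) := by
    have h2 : s * (A - N * ε) ≤ s * (4 * R ^ 2 * (β + s)) := by
      nlinarith [mul_le_mul_of_nonneg_left hNε hβ.le]
    exact le_of_mul_le_mul_left h2 hspos
  have hsub : s ≤ β + Real.sqrt c := by
    rw [hs]
    calc Real.sqrt (β ^ 2 + c) ≤ Real.sqrt ((β + Real.sqrt c) ^ 2) :=
          Real.sqrt_le_sqrt (by nlinarith [Real.sq_sqrt hc0, Real.sqrt_nonneg c])
      _ = β + Real.sqrt c := Real.sqrt_sq (by positivity)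
  have h4c : 4 * R ^ 2 * Real.sqrt c = Real.sqrt (8 * β * R ^ 2 * ((N:ℝ) * Ehat)) := by
    rw [show 8 * β * R ^ 2 * ((N:ℝ) * Ehat) = (4 * R ^ 2) ^ 2 * c from by
      rw [hc]; field_simp; ring]
    rw [Real.sqrt_mul (by positivity), Real.sqrt_sq (by positivity)]
  have hfin : A - N * ε ≤ 8 * β * R ^ 2 + Real.sqrt (8 * β * R ^ 2 * ((N:ℝ) * Ehat)) := by
    calc A - N * ε ≤ 4 * R ^ 2 * (β + s) := hmain
      _ ≤ 4 * R ^ 2 * (β + (β + Real.sqrt c)) := by nlinarith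
      _ = 8 * β * R ^ 2 + 4 * R ^ 2 * Real.sqrt c := by ring
      _ = _ := by rw [h4c]
  have hdiv : Real.sqrt (8 * β * R ^ 2 * ((N:ℝ) * Ehat)) / N
      = Real.sqrt (8 * β * R ^ 2 * Ehat / N) := by
    rw [show 8 * β * R ^ 2 * ((N:ℝ) * Ehat) = (8 * β * R ^ 2 * Ehat / N) * (N:ℝ) ^ 2 from by
      field_simp]
    rw [Real.sqrt_mul (by positivity), Real.sqrt_sq hNpos.le]
    field_simp
  have heq : (1 / (N:ℝ)) * A - ε = (A - N * ε) / N := by field_simp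
  rw [heq]
  calc (A - N * ε) / N ≤ (8 * β * R ^ 2 + Real.sqrt (8 * β * R ^ 2 * ((N:ℝ) * Ehat))) / N :=
        (div_le_div_iff_of_pos_right hNpos).2 hfin
    _ = 8 * β * R ^ 2 / N + Real.sqrt (8 * β * R ^ 2 * Ehat / N) := by
        rw [add_div, hdiv]


/-- Theorem 1: bias-dependent convergence rate of online imitation learning in
expectation, under the tuned constant stepsize `η*` of an admissible online algorithm. -/
theorem online_il_bias_dependent_rate_in_expectation
    {Ω : Type*} {m0 : MeasurableSpace Ω} (P : Measure Ω) [IsProbabilityMeasure P]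
    (F : Filtration ℕ m0)
    {E : Type*} [NormedAddCommGroup E] [NormedSpace ℝ E]
    (Θ : Set E) (hne : Θ.Nonempty) (hcl : IsClosed Θ) (hcv : Convex ℝ Θ)
    (hsep : TopologicalSpace.IsSeparable Θ)
    (β R Ehat : ℝ) (hβ : 0 < β) (hR : 0 < R) (hEhat : 0 ≤ Ehat)
    (N : ℕ) (hN : 1 ≤ N)
    (lhat l : ℕ → Ω → E → ℝ)
    (hCSN : ∀ n ∈ Finset.Icc 1 N, ∀ᵐ ω ∂P, IsCSN (lhat n ω) β)
    (θ : ℕ → Ω → E)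
    (hθΘ : ∀ n ∈ Finset.Icc 1 N, ∀ ω, θ n ω ∈ Θ)
    (hθmeas : ∀ n ∈ Finset.Icc 1 N, StronglyMeasurable[F (n - 1)] (θ n))
    (hint : ∀ n ∈ Finset.Icc 1 N, Integrable (fun ω => lhat n ω (θ n ω)) P)
    (hcond : ∀ n ∈ Finset.Icc 1 N, ∀ᵐ ω ∂P,
      (P[fun ω' => lhat n ω' (θ n ω') | F (n - 1)]) ω = l n ω (θ n ω)
        ∧ ∀ x : E, 0 ≤ l n ω x)
    (εhat : Ω → ℝ)
    (hεhat : ∀ ω, εhat ω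
      = (1 / (N : ℝ)) * sInf ((fun x => ∑ n ∈ Finset.Icc 1 N, lhat n ω x) '' Θ))
    (hεint : Integrable εhat P)
    (hεE : ∀ᵐ ω ∂P, εhat ω ≤ Ehat)
    (ηstar : ℝ)
    (hη : ηstar = 1 / (2 * (β + Real.sqrt (β ^ 2 + β * N * Ehat / (2 * R ^ 2)))))
    (hreg : ∀ᵐ ω ∂P,
      regret Θ N (fun n => lhat n ω) (fun n => θ n ω)
        ≤ R ^ 2 / ηstar
          + (ηstar / 2) * ∑ n ∈ Finset.Icc 1 N, ‖fderiv ℝ (lhat n ω) (θ n ω)‖ ^ 2) :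
    ∫ ω, ((1 / (N : ℝ)) * ∑ n ∈ Finset.Icc 1 N, l n ω (θ n ω) - εhat ω) ∂P
      ≤ 8 * β * R ^ 2 / N + Real.sqrt (8 * β * R ^ 2 * Ehat / N) := by
  have hNpos : (0:ℝ) < N := by exact_mod_cast Nat.lt_of_lt_of_le Nat.zero_lt_one hN
  set C := 8 * β * R ^ 2 / (N:ℝ) + Real.sqrt (8 * β * R ^ 2 * Ehat / N) with hC
  have hCSN' : ∀ᵐ ω ∂P, ∀ n, n ∈ Finset.Icc 1 N → IsCSN (lhat n ω) β := by
    rw [MeasureTheory.ae_all_iff]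
    intro n
    by_cases h : n ∈ Finset.Icc 1 N
    · filter_upwards [hCSN n h] with ω hω _ using hω
    · filter_upwards with ω h' using absurd h' h
  have hptwise : ∀ᵐ ω ∂P,
      (1 / (N : ℝ)) * ∑ n ∈ Finset.Icc 1 N, lhat n ω (θ n ω) - εhat ω ≤ C := by
    filter_upwards [hCSN', hεE, hreg] with ω hω hε hr
    set A := ∑ n ∈ Finset.Icc 1 N, lhat n ω (θ n ω) with hA
    set G := ∑ n ∈ Finset.Icc 1 N, ‖fderiv ℝ (lhat n ω) (θ n ω)‖ ^ 2 with hGdef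
    have hG : G ≤ 4 * β * A := by
      rw [hGdef, hA, Finset.mul_sum]
      exact Finset.sum_le_sum fun n hn => grad_self_bound hβ (hω n hn) (θ n ω)
    have hrget : regret Θ N (fun n => lhat n ω) (fun n => θ n ω) = A - (N:ℝ) * εhat ω := by
      have hSinf : (N:ℝ) * εhat ω
          = sInf ((fun x => ∑ n ∈ Finset.Icc 1 N, lhat n ω x) '' Θ) := by
        rw [hεhat ω]; field_simp
      rw [regret, ← hSinf]
    rw [hrget] at hr
    exact pointwise_alg β R Ehat hβ hR hEhat N hN A G (εhat ω) ηstar hG hε hη hr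
  have hlint : ∀ n ∈ Finset.Icc 1 N, Integrable (fun ω => l n ω (θ n ω)) P := by
    intro n hn
    exact (integrable_condExp (m := F (n - 1))).congr ((hcond n hn).mono fun ω h => h.1)
  have hIeq : ∀ n ∈ Finset.Icc 1 N,
      ∫ ω, l n ω (θ n ω) ∂P = ∫ ω, lhat n ω (θ n ω) ∂P := by
    intro n hn
    have h1 : ∫ ω, l n ω (θ n ω) ∂P
        = ∫ ω, (P[fun ω' => lhat n ω' (θ n ω') | F (n - 1)]) ω ∂P :=
      integral_congr_ae ((hcond n hn).mono fun ω h => h.1.symm)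
    rw [h1, integral_condExp (F.le _)]
  have hswap : ∫ ω, ((1 / (N : ℝ)) * ∑ n ∈ Finset.Icc 1 N, l n ω (θ n ω) - εhat ω) ∂P
      = ∫ ω, ((1 / (N : ℝ)) * ∑ n ∈ Finset.Icc 1 N, lhat n ω (θ n ω) - εhat ω) ∂P := by
    rw [integral_sub ((integrable_finset_sum _ hlint).const_mul _) hεint,
        integral_sub ((integrable_finset_sum _ hint).const_mul _) hεint,
        integral_const_mul, integral_const_mul,
        integral_finset_sum _ hlint, integral_finset_sum _ hint,
        Finset.sum_congr rfl hIeq]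
  rw [hswap]
  calc ∫ ω, ((1 / (N : ℝ)) * ∑ n ∈ Finset.Icc 1 N, lhat n ω (θ n ω) - εhat ω) ∂P
      ≤ ∫ _, C ∂P :=
        integral_mono_ae (((integrable_finset_sum _ hint).const_mul _).sub hεint)
          (integrable_const C) hptwise
    _ = C := by simp
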